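/- Let MBR satisfy the modified bar recursion equation MBR s q = ε_s (fun x => q_x (MBR (s++[x]) q_x)) where ε_s : (X → R) → (ℕ → X) are skewed selection functions and q_x α = q (x :: α). Then MBR' defined by MBR' s q = s ++ MBR s q_s satisfies the alternative equation MBR' s q = s ++ ε_s (fun x => q (MBR' (s++[x]) q)), where q_s α = q (s ++ α) for lists s. -/

import Mathlib

/-- Prepend an element to an infinite sequence. -/
def seqCons {X : Type*} (x : X) (α : ℕ → X) : ℕ → X
  | 0 => x
  | n + 1 => α n

/-- Overwrite the initial segment of an infinite sequence with a finite list. -/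
def listApp {X : Type*} (s : List X) (α : ℕ → X) : ℕ → X :=
  fun i => if h : i < s.length then s.get ⟨i, h⟩ else α (i - s.length)

/-- The list of the first `n` values of an infinite sequence. -/
def firstN {X : Type*} (α : ℕ → X) (n : ℕ) : List X := (List.range n).map α

lemma listApp_seqCons {X : Type*} (s : List X) (x : X) (α : ℕ → X) :
    listApp s (seqCons x α) = listApp (s ++ [x]) α := by
  funext i
  simp only [listApp, List.length_append, List.length_singleton]
  by_cases h : i < s.length
  · rw [dif_pos h, dif_pos (by omega)]
    simp [List.get_eq_getElem, List.getElem_append_left h]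
  · rw [dif_neg h]
    by_cases h2 : i < s.length + 1
    · rw [dif_pos h2]
      have hi : i = s.length := by omega
      subst hi
      simp [seqCons, List.get_eq_getElem, List.getElem_append_right (Nat.le_refl s.length)]
    · rw [dif_neg h2]
      have : i - s.length = (i - (s.length + 1)) + 1 := by omega
      rw [this]
      rfl

theorem stmt13 {X R : Type*} (ε : List X → (X → R) → (ℕ → X))
    (MBR : List X → ((ℕ → X) → R) → (ℕ → X))
    (hMBR : ∀ (s : List X) (q : (ℕ → X) → R),
      MBR s q = ε s (fun x => q (seqCons x (MBR (s ++ [x]) (fun α => q (seqCons x α))))))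
    (MBR' : List X → ((ℕ → X) → R) → (ℕ → X))
    (hMBR' : ∀ (s : List X) (q : (ℕ → X) → R),
      MBR' s q = listApp s (MBR s (fun α => q (listApp s α)))) :
    ∀ (s : List X) (q : (ℕ → X) → R),
      MBR' s q = listApp s (ε s (fun x => q (MBR' (s ++ [x]) q))) := by
  intro s q
  rw [hMBR' s q, hMBR s]
  apply congrArg (listApp s)
  apply congrArg (ε s)
  funext x
  rw [hMBR' (s ++ [x]) q]
  have hq : (fun α => q (listApp s (seqCons x α))) = (fun α => q (listApp (s ++ [x]) α)) := by
    funext α; rw [listApp_seqCons]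
  show q (listApp s (seqCons x (MBR (s ++ [x]) fun α => q (listApp s (seqCons x α))))) =
      q (listApp (s ++ [x]) (MBR (s ++ [x]) fun α => q (listApp (s ++ [x]) α)))
  rw [hq, listApp_seqCons]
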